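/- Let ⁰a = (a₀; a₁, a₂) be a scator with a₀ ≠ 0. Then the internal and external duality operations anti-commute with hypercomplex conjugation: (bar ⁰aᵢ)* + bar(⁰a*)ᵢ = 0 and (bar ⁰aₑ)* + bar(⁰a*)ₑ = 0, where 0 denotes the zero scator (0; 0, 0). -/

import Mathlib

/-- A (1+2)-dimensional scator: scalar component `s` and director components `x`, `y`. -/
structure Scator where
  s : ℝ
  x : ℝ
  y : ℝ

namespace Scator

/-- Componentwise addition of scators. -/
noncomputable def add (a b : Scator) : Scator := ⟨a.s + b.s, a.x + b.x, a.y + b.y⟩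

/-- Componentwise subtraction of scators. -/
noncomputable def sub (a b : Scator) : Scator := ⟨a.s - b.s, a.x - b.x, a.y - b.y⟩

/-- Componentwise multiplication of a scator by a real scalar. -/
noncomputable def smul (l : ℝ) (a : Scator) : Scator := ⟨l * a.s, l * a.x, l * a.y⟩

/-- The scator product. -/
noncomputable def mul (a b : Scator) : Scator :=
  ⟨a.s * b.s + a.x * b.x + a.y * b.y + a.x * a.y * b.x * b.y / (a.s * b.s),
   a.s * b.x + a.x * b.s + a.x * a.y * b.y / a.s + a.y * b.x * b.y / b.s,
   a.s * b.y + a.y * b.s + a.x * a.y * b.x / a.s + a.x * b.x * b.y / b.s⟩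

/-- Hypercomplex conjugate. -/
noncomputable def conj (a : Scator) : Scator := ⟨a.s, -a.x, -a.y⟩

/-- Ordinary dual scator. -/
noncomputable def bar (a : Scator) : Scator := ⟨a.x * a.y / a.s, a.y, a.x⟩

/-- Internal dual scator. -/
noncomputable def barI (a : Scator) : Scator := ⟨a.x, a.s, a.x * a.y / a.s⟩

/-- External dual scator. -/
noncomputable def barE (a : Scator) : Scator := ⟨a.y, a.x * a.y / a.s, a.s⟩

/-- Modulus squared of a scator. -/
noncomputable def norm2 (a : Scator) : ℝ := a.s ^ 2 - a.x ^ 2 - a.y ^ 2 + a.x ^ 2 * a.y ^ 2 / a.s ^ 2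

/-- Inverse of a scator with respect to the scator product. -/
noncomputable def inv (a : Scator) : Scator := smul (1 / norm2 a) (conj a)

end Scator

theorem internal_external_anticommute_conj (a : Scator) (ha : a.s ≠ 0) :
    Scator.add (Scator.conj (Scator.barI a)) (Scator.barI (Scator.conj a)) =
      (⟨0, 0, 0⟩ : Scator) ∧
    Scator.add (Scator.conj (Scator.barE a)) (Scator.barE (Scator.conj a)) =
      (⟨0, 0, 0⟩ : Scator) := by
  constructor <;>
  · simp only [Scator.add, Scator.conj, Scator.barI, Scator.barE, Scator.mk.injEq]
    refine ⟨by ring, by ring, ?_⟩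
    field_simp
    ring
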